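/- If B ⊆ Σⁿ is (1,1)-guaranteed and s ∈ Σⁿ is not in B, then for every position i ∈ {1,…,n} there exists v ∈ B differing from s by exactly one substitution at position i; in particular |N_n^1(s) ∩ B| ≥ n. -/

import Mathlib

/-- Cost structure for the Levenshtein distance (as formerly in Mathlib). -/
structure Levenshtein.Cost (α β δ : Type*) where
  delete : α → δ
  insert : β → δ
  substitute : α → β → δ

/-- The default cost: every deletion, insertion and substitution costs `1`. -/
def Levenshtein.defaultCost {α : Type*} [DecidableEq α] : Levenshtein.Cost α α ℕ where
  delete _ := 1
  insert _ := 1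
  substitute a b := if a = b then 0 else 1

/-- The Levenshtein distance, by its defining recursion (former Mathlib `levenshtein`). -/
def levenshtein {α β δ : Type*} [AddZeroClass δ] [Min δ] (C : Levenshtein.Cost α β δ) :
    List α → List β → δ
  | [], [] => 0
  | [], y :: ys => C.insert y + levenshtein C [] ys
  | x :: xs, [] => C.delete x + levenshtein C xs []
  | x :: xs, y :: ys =>
      min (C.delete x + levenshtein C xs (y :: ys))
        (min (C.insert y + levenshtein C (x :: xs) ys)
          (C.substitute x y + levenshtein C xs ys))

@[simp]
theorem Levenshtein.defaultCost_delete {α : Type*} [DecidableEq α] (a : α) :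
    (Levenshtein.defaultCost : Levenshtein.Cost α α ℕ).delete a = 1 := rfl

@[simp]
theorem Levenshtein.defaultCost_insert {α : Type*} [DecidableEq α] (a : α) :
    (Levenshtein.defaultCost : Levenshtein.Cost α α ℕ).insert a = 1 := rfl

@[simp]
theorem Levenshtein.defaultCost_substitute {α : Type*} [DecidableEq α] (a b : α) :
    (Levenshtein.defaultCost : Levenshtein.Cost α α ℕ).substitute a b = if a = b then 0 else 1 :=
  rfl

@[simp]
theorem levenshtein_nil_nil {α β δ : Type*} [AddZeroClass δ] [Min δ]
    (C : Levenshtein.Cost α β δ) : levenshtein C [] [] = 0 := by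
  simp only [levenshtein]

@[simp]
theorem levenshtein_nil_cons {α β δ : Type*} [AddZeroClass δ] [Min δ]
    (C : Levenshtein.Cost α β δ) (y : β) (ys : List β) :
    levenshtein C [] (y :: ys) = C.insert y + levenshtein C [] ys := by
  simp only [levenshtein]

@[simp]
theorem levenshtein_cons_nil {α β δ : Type*} [AddZeroClass δ] [Min δ]
    (C : Levenshtein.Cost α β δ) (x : α) (xs : List α) :
    levenshtein C (x :: xs) [] = C.delete x + levenshtein C xs [] := by
  simp only [levenshtein]

@[simp]
theorem levenshtein_cons_cons {α β δ : Type*} [AddZeroClass δ] [Min δ]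
    (C : Levenshtein.Cost α β δ) (x : α) (xs : List α) (y : β) (ys : List β) :
    levenshtein C (x :: xs) (y :: ys) =
      min (C.delete x + levenshtein C xs (y :: ys))
        (min (C.insert y + levenshtein C (x :: xs) ys)
          (C.substitute x y + levenshtein C xs ys)) := by
  rw [levenshtein]

/-- Edit (Levenshtein) distance between two length-`n` sequences over `α`. -/
def editDist {α : Type*} [DecidableEq α] {n : ℕ} (s t : Fin n → α) : ℕ :=
  levenshtein Levenshtein.defaultCost (List.ofFn s) (List.ofFn t)

/-- `B` is a `(d, r)`-guaranteed subset of `Σⁿ`: for every pair of sequences within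
edit distance `d`, some sequence of `B` lies in both of their `r`-neighborhoods. -/
def IsGuaranteed {α : Type*} [DecidableEq α] {n : ℕ} (d r : ℕ)
    (B : Set (Fin n → α)) : Prop :=
  ∀ s t : Fin n → α, editDist s t ≤ d →
    ∃ v ∈ B, editDist s v ≤ r ∧ editDist t v ≤ r

private lemma lev_eq_zero {α : Type*} [DecidableEq α] :
    ∀ (x y : List α), levenshtein Levenshtein.defaultCost x y = 0 → x = y := by
  intro x
  induction x with
  | nil =>
    intro y h
    cases y with
    | nil => rfl
    | cons b ys => simp [levenshtein_nil_cons] at h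
  | cons a xs ih =>
    intro y h
    cases y with
    | nil => simp [levenshtein_cons_nil] at h
    | cons b ys =>
      rw [levenshtein_cons_cons] at h
      simp only [Levenshtein.defaultCost_delete, Levenshtein.defaultCost_insert,
        Levenshtein.defaultCost_substitute, Nat.min_eq_zero_iff, Nat.add_eq_zero] at h
      rcases h with h | h | h
      · omega
      · omega
      · obtain ⟨h1, h2⟩ := h
        have hab : a = b := by by_contra hab; simp [hab] at h1
        rw [hab, ih ys h2]

/-- Hamming-type weight of a pair of lists. -/
private def hamList {α : Type*} [DecidableEq α] (x y : List α) : ℕ :=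
  (List.zipWith (fun a b => if a = b then 0 else 1) x y).sum

private lemma lev_le_ham {α : Type*} [DecidableEq α] :
    ∀ (x y : List α), x.length = y.length →
      levenshtein Levenshtein.defaultCost x y ≤ hamList x y := by
  intro x
  induction x with
  | nil =>
    intro y h
    cases y with
    | nil => simp [hamList]
    | cons b ys => simp at h
  | cons a xs ih =>
    intro y h
    cases y with
    | nil => simp at h
    | cons b ys =>
      rw [levenshtein_cons_cons]
      have hlen : xs.length = ys.length := by simpa using h
      have := ih ys hlen
      have hmin : (Levenshtein.defaultCost.substitute a b +
          levenshtein Levenshtein.defaultCost xs ys : ℕ) ≤ hamList (a :: xs) (b :: ys) := by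
        simp only [hamList, List.zipWith_cons_cons, List.sum_cons,
          Levenshtein.defaultCost_substitute]
        exact Nat.add_le_add_left this _
      exact le_trans (le_trans (min_le_right _ _) (min_le_right _ _)) hmin

private lemma ham_le_one {α : Type*} [DecidableEq α] :
    ∀ (x y : List α), x.length = y.length →
      levenshtein Levenshtein.defaultCost x y ≤ 1 → hamList x y ≤ 1 := by
  intro x
  induction x with
  | nil =>
    intro y h _
    cases y with
    | nil => simp [hamList]
    | cons b ys => simp at h
  | cons a xs ih =>
    intro y h hlev
    cases y with
    | nil => simp at h
    | cons b ys =>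
      have hlen : xs.length = ys.length := by simpa using h
      rw [levenshtein_cons_cons] at hlev
      simp only [Levenshtein.defaultCost_delete, Levenshtein.defaultCost_insert,
        Levenshtein.defaultCost_substitute, min_le_iff] at hlev
      rcases hlev with h1 | h1 | h1
      · -- 1 + lev xs (b::ys) ≤ 1 so lev xs (b::ys) = 0 so xs = b::ys, length contradiction
        have h0 : levenshtein Levenshtein.defaultCost xs (b :: ys) = 0 := by omega
        have := lev_eq_zero _ _ h0
        rw [this] at hlen
        simp at hlen
      · have h0 : levenshtein Levenshtein.defaultCost (a :: xs) ys = 0 := by omega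
        have := lev_eq_zero _ _ h0
        rw [← this] at hlen
        simp at hlen
      · by_cases hab : a = b
        · simp only [hab, if_true, zero_add] at h1
          have := ih ys hlen h1
          simp only [hamList, List.zipWith_cons_cons, List.sum_cons, hab, if_true, zero_add]
          exact this
        · simp only [hab, if_false] at h1
          have h0 : levenshtein Levenshtein.defaultCost xs ys = 0 := by omega
          have hxy := lev_eq_zero _ _ h0
          simp only [hamList, List.zipWith_cons_cons, List.sum_cons, hab, if_false]
          have : hamList xs ys = 0 := by
            rw [hxy]
            simp [hamList, List.zipWith_self]
          simp only [hamList] at this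
          omega

private lemma ham_ofFn {α : Type*} [DecidableEq α] {n : ℕ} (s t : Fin n → α) :
    hamList (List.ofFn s) (List.ofFn t) =
      (Finset.univ.filter fun i => ¬ s i = t i).card := by
  have hz : List.zipWith (fun a b => if a = b then 0 else 1) (List.ofFn s) (List.ofFn t)
      = List.ofFn (fun i => if s i = t i then (0 : ℕ) else 1) := by
    induction n with
    | zero => simp
    | succ m ih =>
      rw [List.ofFn_succ, List.ofFn_succ, List.ofFn_succ, List.zipWith_cons_cons, ih]
  rw [hamList, hz, List.sum_ofFn, Finset.card_filter]
  congr 1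
  funext i
  by_cases h : s i = t i <;> simp [h]

private lemma editDist_le_one_iff {α : Type*} [DecidableEq α] {n : ℕ} (s t : Fin n → α) :
    editDist s t ≤ 1 ↔ (Finset.univ.filter fun i => ¬ s i = t i).card ≤ 1 := by
  constructor
  · intro h
    rw [← ham_ofFn]
    exact ham_le_one _ _ (by simp) h
  · intro h
    refine le_trans (lev_le_ham _ _ (by simp)) ?_
    rw [ham_ofFn]
    exact h

theorem stmt15 {α : Type*} [Fintype α] [DecidableEq α] (hα : 1 < Fintype.card α)
    {n : ℕ} (B : Set (Fin n → α)) (hB : IsGuaranteed 1 1 B)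
    (s : Fin n → α) (hs : s ∉ B) :
    (∀ i : Fin n, ∃ v ∈ B, v i ≠ s i ∧ v = Function.update s i (v i)) ∧
    n ≤ Set.ncard {v ∈ B | editDist s v ≤ 1} := by
  have main : ∀ i : Fin n, ∃ v ∈ B, v i ≠ s i ∧ v = Function.update s i (v i) := by
    intro i
    -- find b ≠ s i
    obtain ⟨b, hb⟩ : ∃ b : α, b ≠ s i := Fintype.exists_ne_of_one_lt_card hα (s i)
    set t := Function.update s i b with ht
    have hst : editDist s t ≤ 1 := by
      rw [editDist_le_one_iff]
      have : (Finset.univ.filter fun j => ¬ s j = t j) ⊆ {i} := by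
        intro j hj
        simp only [Finset.mem_filter, Finset.mem_univ, true_and] at hj
        simp only [Finset.mem_singleton]
        by_contra hji
        exact hj (by simp [ht, Function.update_of_ne hji])
      calc _ ≤ ({i} : Finset (Fin n)).card := Finset.card_le_card this
        _ = 1 := Finset.card_singleton i
    obtain ⟨v, hvB, hsv, htv⟩ := hB s t hst
    rw [editDist_le_one_iff] at hsv htv
    -- v ≠ s
    have hvs : v ≠ s := fun h => hs (h ▸ hvB)
    -- there is some j with s j ≠ v j
    have hne : (Finset.univ.filter fun j => ¬ s j = v j).Nonempty := by
      by_contra h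
      rw [Finset.not_nonempty_iff_eq_empty, Finset.filter_eq_empty_iff] at h
      exact hvs (funext fun j => (not_not.mp (h (Finset.mem_univ j))).symm)
    obtain ⟨j, hj⟩ := hne
    simp only [Finset.mem_filter, Finset.mem_univ, true_and] at hj
    have hDj : (Finset.univ.filter fun k => ¬ s k = v k) = {j} := by
      apply Finset.eq_singleton_iff_unique_mem.mpr
      refine ⟨by simp [hj], ?_⟩
      intro k hk
      by_contra hkj
      have h2 : ({j, k} : Finset (Fin n)) ⊆ Finset.univ.filter fun l => ¬ s l = v l := by
        intro l hl
        simp only [Finset.mem_insert, Finset.mem_singleton] at hl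
        rcases hl with rfl | rfl
        · simp [hj]
        · exact hk
      have := Finset.card_le_card h2
      rw [Finset.card_insert_of_notMem (by simp [Ne.symm hkj])] at this
      simp at this
      omega
    -- v agrees with s off j
    have hvupd : v = Function.update s j (v j) := by
      funext k
      by_cases hkj : k = j
      · subst hkj; simp
      · rw [Function.update_of_ne hkj]
        by_contra hne2
        have : k ∈ (Finset.univ.filter fun l => ¬ s l = v l) := by
          simp only [Finset.mem_filter, Finset.mem_univ, true_and]
          exact fun h => hne2 h.symm
        rw [hDj] at this
        simp at this
        exact hkj this
    -- j = i
    have hji : j = i := by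
      by_contra hji
      have hti : ¬ t i = v i := by
        have : v i = s i := by rw [hvupd, Function.update_of_ne (Ne.symm hji)]
        rw [this, ht]
        simp [hb]
      have htj : ¬ t j = v j := by
        have : t j = s j := by rw [ht, Function.update_of_ne hji]
        rw [this]; exact hj
      have h2 : ({i, j} : Finset (Fin n)) ⊆ Finset.univ.filter fun l => ¬ t l = v l := by
        intro l hl
        simp only [Finset.mem_insert, Finset.mem_singleton] at hl
        rcases hl with rfl | rfl
        · simp [hti]
        · simp [htj]
      have := Finset.card_le_card h2
      rw [Finset.card_insert_of_notMem (by simp [Ne.symm hji])] at this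
      simp at this
      omega
    subst hji
    exact ⟨v, hvB, fun h => hj h.symm, hvupd⟩
  refine ⟨main, ?_⟩
  -- choose witnesses
  choose f hfB hfne hfupd using main
  set S := {v ∈ B | editDist s v ≤ 1} with hS
  have hfS : ∀ i, f i ∈ S := by
    intro i
    refine ⟨hfB i, ?_⟩
    rw [editDist_le_one_iff]
    have : (Finset.univ.filter fun j => ¬ s j = f i j) ⊆ {i} := by
      intro j hj
      simp only [Finset.mem_filter, Finset.mem_univ, true_and] at hj
      simp only [Finset.mem_singleton]
      by_contra hji
      exact hj (by rw [hfupd i, Function.update_of_ne hji])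
    calc _ ≤ ({i} : Finset (Fin n)).card := Finset.card_le_card this
      _ = 1 := Finset.card_singleton i
  have hinj : Function.Injective f := by
    intro i j hij
    by_contra hne2
    have h1 : f i i ≠ s i := hfne i
    have h2 : f j i = s i := by rw [hfupd j, Function.update_of_ne hne2]
    rw [hij, h2] at h1
    exact h1 rfl
  have hg : Function.Injective (fun i : Fin n => (⟨f i, hfS i⟩ : S)) := by
    intro i j h
    exact hinj (congrArg Subtype.val h)
  calc n = Nat.card (Fin n) := by simp
    _ ≤ Nat.card S := Nat.card_le_card_of_injective _ hg
    _ = S.ncard := (Nat.card_coe_set_eq S).symm
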